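/- For every odd positive integer n, ∫_0^{1/2} ∫_0^x x(1−2x) · ( c_n(y,x) − c_n(x,y) ) dy dx = (sin(nπ/2)/π^4) · ( 2·sinh(nπ/2)/n^4 − π·cosh(nπ/2)/(2n^3) ), where c_n(x,y) := cos(nπx)·cosh(nπy). -/

import Mathlib

/-- `c_n(x,y) = cos(nπx)·cosh(nπy)`. -/
noncomputable def cfun (n : ℕ) (x y : ℝ) : ℝ :=
  Real.cos ((n : ℝ) * Real.pi * x) * Real.cosh ((n : ℝ) * Real.pi * y)

lemma hax (a x : ℝ) : HasDerivAt (fun t : ℝ => a * t) a x := by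
  simpa using (hasDerivAt_id x).const_mul a

lemma hFderiv (a : ℝ) (ha : a ≠ 0) (x : ℝ) :
    HasDerivAt (fun t : ℝ =>
      ((1 - 4*t)/(2*a^3)) * (Real.sin (a*t) * Real.cosh (a*t) + Real.cos (a*t) * Real.sinh (a*t))
      + (2/a^4) * (Real.sin (a*t) * Real.sinh (a*t))
      - ((t - 2*t^2)/a^2) * (Real.cos (a*t) * Real.cosh (a*t)))
    ((x - 2*x^2) * (Real.sin (a*x) * Real.cosh (a*x) - Real.cos (a*x) * Real.sinh (a*x)) / a)
    x := by
  have hs : HasDerivAt (fun t : ℝ => Real.sin (a*t)) (Real.cos (a*x) * a) x := (hax a x).sin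
  have hc : HasDerivAt (fun t : ℝ => Real.cos (a*t)) (-Real.sin (a*x) * a) x := by
    simpa using (hax a x).cos
  have hS : HasDerivAt (fun t : ℝ => Real.sinh (a*t)) (Real.cosh (a*x) * a) x := (hax a x).sinh
  have hC : HasDerivAt (fun t : ℝ => Real.cosh (a*t)) (Real.sinh (a*x) * a) x := (hax a x).cosh
  have hp1 : HasDerivAt (fun t : ℝ => (1 - 4*t)/(2*a^3)) (-4/(2*a^3)) x := by
    simpa using (((hasDerivAt_id x).const_mul 4).const_sub 1).div_const (2*a^3)
  have hp3 : HasDerivAt (fun t : ℝ => (t - 2*t^2)/a^2) ((1 - 2*(2*x))/a^2) x := by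
    have h0 : HasDerivAt (fun t : ℝ => t - 2*t^2) (1 - 2*(2*x)) x := by
      refine ((hasDerivAt_id x).sub (((hasDerivAt_pow 2 x)).const_mul 2)).congr_deriv ?_
      norm_num
    exact h0.div_const _
  have h := ((hp1.mul ((hs.mul hC).add (hc.mul hS))).add
      (((hs.mul hS)).const_mul (2/a^4))).sub (hp3.mul (hc.mul hC))
  refine h.congr_deriv ?_
  simp only [Pi.mul_apply, Pi.add_apply]
  field_simp
  ring

lemma inner_eval (a : ℝ) (ha : a ≠ 0) (x : ℝ) :
    (∫ y in (0:ℝ)..x,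
        x * (1 - 2*x) * (Real.cos (a*y) * Real.cosh (a*x) - Real.cos (a*x) * Real.cosh (a*y)))
      = (x - 2*x^2) * (Real.sin (a*x) * Real.cosh (a*x) - Real.cos (a*x) * Real.sinh (a*x)) / a := by
  have hder : ∀ y ∈ Set.uIcc (0:ℝ) x, HasDerivAt
      (fun y : ℝ => x * (1 - 2*x) * (Real.cosh (a*x) * (Real.sin (a*y) / a)
        - Real.cos (a*x) * (Real.sinh (a*y) / a)))
      (x * (1 - 2*x) * (Real.cos (a*y) * Real.cosh (a*x) - Real.cos (a*x) * Real.cosh (a*y))) y := by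
    intro y _
    have hs : HasDerivAt (fun y : ℝ => Real.sin (a*y)) (Real.cos (a*y) * a) y := (hax a y).sin
    have hS : HasDerivAt (fun y : ℝ => Real.sinh (a*y)) (Real.cosh (a*y) * a) y := (hax a y).sinh
    have h := (((hs.div_const a).const_mul (Real.cosh (a*x))).sub
      ((hS.div_const a).const_mul (Real.cos (a*x)))).const_mul (x * (1 - 2*x))
    refine h.congr_deriv ?_
    rw [mul_div_cancel_right₀ _ ha, mul_div_cancel_right₀ _ ha]
    ring
  have hint : IntervalIntegrable
      (fun y => x * (1 - 2*x) * (Real.cos (a*y) * Real.cosh (a*x) - Real.cos (a*x) * Real.cosh (a*y)))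
      MeasureTheory.volume 0 x := by
    apply Continuous.intervalIntegrable
    fun_prop
  rw [intervalIntegral.integral_eq_sub_of_hasDerivAt hder hint]
  simp only [mul_zero, Real.sin_zero, Real.sinh_zero, zero_div, sub_zero, mul_zero]
  field_simp

lemma outer_eval (a : ℝ) (ha : a ≠ 0) :
    (∫ x in (0:ℝ)..(1/2),
        (x - 2*x^2) * (Real.sin (a*x) * Real.cosh (a*x) - Real.cos (a*x) * Real.sinh (a*x)) / a)
      = -(Real.sin (a/2) * Real.cosh (a/2) + Real.cos (a/2) * Real.sinh (a/2)) / (2*a^3)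
        + (2/a^4) * (Real.sin (a/2) * Real.sinh (a/2)) := by
  have hint2 : IntervalIntegrable
      (fun x => (x - 2*x^2) * (Real.sin (a*x) * Real.cosh (a*x) - Real.cos (a*x) * Real.sinh (a*x)) / a)
      MeasureTheory.volume 0 (1/2) := by
    apply Continuous.intervalIntegrable
    fun_prop
  rw [intervalIntegral.integral_eq_sub_of_hasDerivAt (fun x _ => hFderiv a ha x) hint2]
  have h2 : a * (1/2 : ℝ) = a/2 := by ring
  rw [h2]
  simp only [mul_zero, zero_mul, Real.sin_zero, Real.sinh_zero, Real.cos_zero, Real.cosh_zero,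
    add_zero, zero_add, sub_zero, zero_div]
  field_simp
  ring

lemma cos_odd_half (n : ℕ) (hn : Odd n) : Real.cos ((n : ℝ) * Real.pi / 2) = 0 := by
  obtain ⟨k, rfl⟩ := hn
  have h : ((2*k+1 : ℕ) : ℝ) * Real.pi / 2 = k * Real.pi + Real.pi/2 := by
    push_cast; ring
  rw [h, Real.cos_add, Real.cos_pi_div_two, Real.sin_pi_div_two, Real.sin_nat_mul_pi]
  ring


/-- For every odd positive integer `n`,
`∫_0^{1/2}∫_0^x x(1−2x)(c_n(y,x)−c_n(x,y)) dy dx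
  = (sin(nπ/2)/π^4)·(2sinh(nπ/2)/n^4 − πcosh(nπ/2)/(2n^3))`. -/
theorem I_n1_eval :
    ∀ n : ℕ, Odd n →
      (∫ x in (0:ℝ)..(1/2), ∫ y in (0:ℝ)..x,
          x * (1 - 2 * x) * (cfun n y x - cfun n x y))
        = (Real.sin ((n : ℝ) * Real.pi / 2) / Real.pi ^ 4) *
            (2 * Real.sinh ((n : ℝ) * Real.pi / 2) / (n : ℝ) ^ 4
              - Real.pi * Real.cosh ((n : ℝ) * Real.pi / 2) / (2 * (n : ℝ) ^ 3)) := by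
  intro n hn
  have hn0 : (n : ℝ) ≠ 0 := by
    have := hn.pos
    positivity
  have hpi : Real.pi ≠ 0 := Real.pi_ne_zero
  have ha : (n : ℝ) * Real.pi ≠ 0 := mul_ne_zero hn0 hpi
  have inner : ∀ x : ℝ, (∫ y in (0:ℝ)..x, x * (1 - 2 * x) * (cfun n y x - cfun n x y))
      = (x - 2*x^2) * (Real.sin ((n:ℝ)*Real.pi*x) * Real.cosh ((n:ℝ)*Real.pi*x)
          - Real.cos ((n:ℝ)*Real.pi*x) * Real.sinh ((n:ℝ)*Real.pi*x)) / ((n:ℝ)*Real.pi) := by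
    intro x
    have := inner_eval ((n:ℝ)*Real.pi) ha x
    rw [← this]
    apply intervalIntegral.integral_congr
    intro y _
    simp only [cfun]
  rw [intervalIntegral.integral_congr (fun x _ => inner x), outer_eval ((n:ℝ)*Real.pi) ha,
    cos_odd_half n hn]
  simp only [zero_mul, add_zero]
  field_simp
  ring
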